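/- There is an instance where solving the batching problem optimally for each family in isolation and then sequencing all resulting batches by WSPT is strictly suboptimal: for the instance with unit processing times, family A jobs (weights 20,20,11,10; sizes 1,1,3,3), family B jobs (weights 10,20; sizes 2,2), and capacity 4, the batching {1,3},{2,4} is optimal for family A alone and {5,6} is optimal for family B alone, yet the best sequencing of these three batches has objective 181 > 173, the overall optimum. -/

import Mathlib

/-- Weights of the six jobs (jobs 1,…,6 are indexed 0,…,5). -/
def wt : Fin 6 → ℕ := ![20, 20, 11, 10, 10, 20]

/-- Sizes of the six jobs. -/
def sz : Fin 6 → ℕ := ![1, 1, 3, 3, 2, 2]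

/-- Families: jobs 1–4 are family A (`0`), jobs 5–6 are family B (`1`). -/
def fm : Fin 6 → Fin 2 := ![0, 0, 0, 0, 1, 1]

/-- A feasible schedule of the jobs of `S` only: a sequence of batches
partitioning `S`, each batch containing jobs of a single family with total size
at most `4`. -/
def FeasibleOn (S : Finset (Fin 6)) (bs : List (Finset (Fin 6))) : Prop :=
  (∀ i ∈ S, ∃! k : Fin bs.length, i ∈ bs.get k) ∧
  (∀ b ∈ bs, ∀ i ∈ b, i ∈ S) ∧
  (∀ b ∈ bs, ∀ i ∈ b, ∀ j ∈ b, fm i = fm j) ∧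
  (∀ b ∈ bs, ∑ i ∈ b, sz i ≤ 4)

/-- Total weighted completion time: with unit processing times the `k`-th batch
completes at time `k + 1`. -/
def obj (bs : List (Finset (Fin 6))) : ℕ :=
  ∑ k : Fin bs.length, (k.1 + 1) * ∑ i ∈ bs.get k, wt i

/-- The family-A jobs (jobs 1,2,3,4). -/
def famA : Finset (Fin 6) := {0, 1, 2, 3}

/-- The family-B jobs (jobs 5,6). -/
def famB : Finset (Fin 6) := {4, 5}

set_option maxRecDepth 100000
set_option synthInstance.maxSize 2000
set_option synthInstance.maxHeartbeats 1000000
set_option maxHeartbeats 4000000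

instance (priority := high) {n : ℕ} (p : Fin n → Prop) [DecidablePred p] :
    Decidable (∃! k, p k) :=
  inferInstanceAs (Decidable (∃ k, p k ∧ ∀ y, p y → y = k))

def totf (f : Fin 6 → ℕ) (bs : List (Finset (Fin 6))) : ℕ :=
  ∑ k : Fin bs.length, ∑ i ∈ bs.get k, f i

lemma getmem (bs : List (Finset (Fin 6))) (k : Fin bs.length) : bs.get k ∈ bs := by
  have := List.get_mem bs k
  simpa using this

lemma totf_cons (f : Fin 6 → ℕ) (b : Finset (Fin 6)) (bs : List (Finset (Fin 6))) :
    totf f (b :: bs) = (∑ i ∈ b, f i) + totf f bs := by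
  unfold totf
  simp only [List.length_cons]
  rw [Fin.sum_univ_succ]
  rfl

lemma obj_cons (b : Finset (Fin 6)) (bs : List (Finset (Fin 6))) :
    obj (b :: bs) = totf wt (b :: bs) + obj bs := by
  unfold obj totf
  simp only [List.length_cons]
  rw [Fin.sum_univ_succ, Fin.sum_univ_succ]
  have h : ∀ k : Fin bs.length,
      ((Fin.succ k).1 + 1) * ∑ i ∈ (b :: bs).get k.succ, wt i
        = (∑ i ∈ bs.get k, wt i) + (k.1 + 1) * ∑ i ∈ bs.get k, wt i := by
    intro k
    show (k.1 + 1 + 1) * ∑ i ∈ bs.get k, wt i = _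
    ring
  rw [Finset.sum_congr rfl (fun k _ => h k), Finset.sum_add_distrib]
  have h2 : ∀ i : Fin bs.length, (b :: bs).get i.succ = bs.get i := fun _ => rfl
  simp only [h2, Fin.val_zero, Nat.zero_mul, Nat.zero_add]
  ring

lemma totf_le_obj (bs : List (Finset (Fin 6))) : totf wt bs ≤ obj bs := by
  unfold obj totf
  refine Finset.sum_le_sum fun k _ => ?_
  exact Nat.le_mul_of_pos_left _ (Nat.succ_pos _)

lemma feas_sum {S : Finset (Fin 6)} {bs : List (Finset (Fin 6))}
    (h : FeasibleOn S bs) (f : Fin 6 → ℕ) : totf f bs = ∑ i ∈ S, f i := by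
  obtain ⟨h1, h2, -, -⟩ := h
  unfold totf
  rw [← Finset.sum_biUnion]
  · refine Finset.sum_congr ?_ (fun _ _ => rfl)
    ext i
    simp only [Finset.mem_biUnion, Finset.mem_univ, true_and]
    constructor
    · rintro ⟨k, hk⟩
      exact h2 _ (getmem bs k) i hk
    · intro hi
      obtain ⟨k, hk, -⟩ := h1 i hi
      exact ⟨k, hk⟩
  · intro k _ l _ hkl
    show Disjoint (bs.get k) (bs.get l)
    rw [Finset.disjoint_left]
    intro i hik hil
    have hiS := h2 _ (getmem bs k) i hik
    obtain ⟨m, -, hu⟩ := h1 i hiS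
    exact hkl ((hu k hik).trans (hu l hil).symm)

lemma feas_disj {S : Finset (Fin 6)} {bs : List (Finset (Fin 6))}
    (h : FeasibleOn S bs) {k l : Fin bs.length} (hkl : k ≠ l) :
    Disjoint (bs.get k) (bs.get l) := by
  rw [Finset.disjoint_left]
  intro i hik hil
  have hiS := h.2.1 _ (getmem bs k) i hik
  obtain ⟨m, -, hu⟩ := h.1 i hiS
  exact hkl ((hu k hik).trans (hu l hil).symm)

lemma feas_len {S : Finset (Fin 6)} {bs : List (Finset (Fin 6))}
    (h : FeasibleOn S bs) : ∑ i ∈ S, sz i ≤ 4 * bs.length := by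
  rw [← feas_sum h sz]
  unfold totf
  calc ∑ k : Fin bs.length, ∑ i ∈ bs.get k, sz i
      ≤ ∑ _k : Fin bs.length, 4 :=
        Finset.sum_le_sum fun k _ => h.2.2.2 _ (getmem bs k)
    _ = 4 * bs.length := by simp [Finset.sum_const, mul_comm]

lemma pairA : ∀ b0 : Finset (Fin 6), b0 ⊆ famA → ∑ i ∈ b0, sz i ≤ 4 →
    ∀ b1 : Finset (Fin 6), b1 ⊆ famA → ∑ i ∈ b1, sz i ≤ 4 → Disjoint b0 b1 →
    2 * (∑ i ∈ b0, wt i) + ∑ i ∈ b1, wt i ≤ 92 := by decide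

lemma tripleU : ∀ b0 : Finset (Fin 6), (∀ i ∈ b0, ∀ j ∈ b0, fm i = fm j) → ∑ i ∈ b0, sz i ≤ 4 →
    ∀ b1 : Finset (Fin 6), (∀ i ∈ b1, ∀ j ∈ b1, fm i = fm j) → ∑ i ∈ b1, sz i ≤ 4 → Disjoint b0 b1 →
    ∀ b2 : Finset (Fin 6), (∀ i ∈ b2, ∀ j ∈ b2, fm i = fm j) → ∑ i ∈ b2, sz i ≤ 4 → Disjoint b0 b2 → Disjoint b1 b2 →
    3 * (∑ i ∈ b0, wt i) + 2 * (∑ i ∈ b1, wt i) + (∑ i ∈ b2, wt i) ≤ 191 := by decide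

lemma lbA : ∀ bs, FeasibleOn famA bs → 91 ≤ obj bs := by
  intro bs hf
  have hw : totf wt bs = 61 := by
    rw [feas_sum hf wt]; decide
  have hlen : (8 : ℕ) ≤ 4 * bs.length := by
    have := feas_len hf
    have h8 : ∑ i ∈ famA, sz i = 8 := by decide
    omega
  obtain - | ⟨b0, bs'⟩ := bs
  · simp at hlen
  obtain - | ⟨b1, rest⟩ := bs'
  · simp at hlen
  have e1 := obj_cons b0 (b1 :: rest)
  have e2 := obj_cons b1 rest
  have t1 := totf_cons wt b0 (b1 :: rest)
  have t2 := totf_cons wt b1 rest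
  have hle := totf_le_obj rest
  have hs0 : b0 ⊆ famA := fun i hi => hf.2.1 b0 (by simp) i hi
  have hs1 : b1 ⊆ famA := fun i hi => hf.2.1 b1 (by simp) i hi
  have hz0 : ∑ i ∈ b0, sz i ≤ 4 := hf.2.2.2 b0 (by simp)
  have hz1 : ∑ i ∈ b1, sz i ≤ 4 := hf.2.2.2 b1 (by simp)
  have hd : Disjoint b0 b1 :=
    feas_disj hf (k := ⟨0, by simp⟩) (l := ⟨1, by simp⟩) (by simp [Fin.ext_iff])
  have hp := pairA b0 hs0 hz0 b1 hs1 hz1 hd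
  omega

lemma lbB : ∀ bs, FeasibleOn famB bs → 30 ≤ obj bs := by
  intro bs hf
  have hw : totf wt bs = 30 := by
    rw [feas_sum hf wt]; decide
  have := totf_le_obj bs
  omega

lemma lbU : ∀ bs, FeasibleOn Finset.univ bs → 173 ≤ obj bs := by
  intro bs hf
  have hw : totf wt bs = 91 := by
    rw [feas_sum hf wt]; decide
  have hlen : (12 : ℕ) ≤ 4 * bs.length := by
    have := feas_len hf
    have h12 : ∑ i ∈ (Finset.univ : Finset (Fin 6)), sz i = 12 := by decide
    omega
  obtain - | ⟨b0, bs'⟩ := bs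
  · simp at hlen
  obtain - | ⟨b1, bs''⟩ := bs'
  · simp at hlen
  obtain - | ⟨b2, rest⟩ := bs''
  · simp at hlen
  have e1 := obj_cons b0 (b1 :: b2 :: rest)
  have e2 := obj_cons b1 (b2 :: rest)
  have e3 := obj_cons b2 rest
  have t1 := totf_cons wt b0 (b1 :: b2 :: rest)
  have t2 := totf_cons wt b1 (b2 :: rest)
  have t3 := totf_cons wt b2 rest
  have hle := totf_le_obj rest
  have hm0 : ∀ i ∈ b0, ∀ j ∈ b0, fm i = fm j := hf.2.2.1 b0 (by simp)
  have hm1 : ∀ i ∈ b1, ∀ j ∈ b1, fm i = fm j := hf.2.2.1 b1 (by simp)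
  have hm2 : ∀ i ∈ b2, ∀ j ∈ b2, fm i = fm j := hf.2.2.1 b2 (by simp)
  have hz0 : ∑ i ∈ b0, sz i ≤ 4 := hf.2.2.2 b0 (by simp)
  have hz1 : ∑ i ∈ b1, sz i ≤ 4 := hf.2.2.2 b1 (by simp)
  have hz2 : ∑ i ∈ b2, sz i ≤ 4 := hf.2.2.2 b2 (by simp)
  have hd01 : Disjoint b0 b1 :=
    feas_disj hf (k := ⟨0, by simp⟩) (l := ⟨1, by simp⟩) (by simp [Fin.ext_iff])
  have hd02 : Disjoint b0 b2 :=
    feas_disj hf (k := ⟨0, by simp⟩) (l := ⟨2, by simp⟩) (by simp [Fin.ext_iff])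
  have hd12 : Disjoint b1 b2 :=
    feas_disj hf (k := ⟨1, by simp⟩) (l := ⟨2, by simp⟩) (by simp [Fin.ext_iff])
  have hp := tripleU b0 hm0 hz0 b1 hm1 hz1 hd01 b2 hm2 hz2 hd02 hd12
  omega

/-- Solving each family in isolation and then sequencing by WSPT
can be strictly suboptimal: the batching `{1,3}, {2,4}` is optimal for family A
alone (value 91) and `{5,6}` is optimal for family B alone (value 30), yet the best
sequencing of these three batches has objective `181`, strictly larger than the
overall optimum `173`. -/
theorem per_family_batching_then_wspt_suboptimal :
    -- `{1,3},{2,4}` is an optimal schedule for family A alone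
    (FeasibleOn famA [{0, 2}, {1, 3}] ∧ obj [{0, 2}, {1, 3}] = 91 ∧
      ∀ bs, FeasibleOn famA bs → 91 ≤ obj bs) ∧
    -- `{5,6}` is an optimal schedule for family B alone
    (FeasibleOn famB [{4, 5}] ∧ obj [{4, 5}] = 30 ∧
      ∀ bs, FeasibleOn famB bs → 30 ≤ obj bs) ∧
    -- the best sequencing of the three batches has objective exactly 181
    ((∀ bs : List (Finset (Fin 6)),
        bs.Perm [{0, 2}, {1, 3}, {4, 5}] → 181 ≤ obj bs) ∧
      (∃ bs : List (Finset (Fin 6)),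
        bs.Perm [{0, 2}, {1, 3}, {4, 5}] ∧ obj bs = 181)) ∧
    -- whereas the overall optimum over all six jobs is 173
    ((∃ bs, FeasibleOn Finset.univ bs ∧ obj bs = 173) ∧
      ∀ bs, FeasibleOn Finset.univ bs → 173 ≤ obj bs) ∧
    (181 : ℕ) > 173 := by
  refine ⟨⟨by unfold FeasibleOn; decide, by decide, lbA⟩,
    ⟨by unfold FeasibleOn; decide, by decide, lbB⟩,
    ⟨?_, ⟨[{0, 2}, {1, 3}, {4, 5}], List.Perm.refl _, by decide⟩⟩,
    ⟨⟨[{0, 1}, {4, 5}, {2}, {3}], by unfold FeasibleOn; decide, by decide⟩, lbU⟩,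
    by norm_num⟩
  intro bs h
  have hnd : bs.Nodup := h.nodup_iff.mpr (by decide)
  have hlen := h.length_eq
  obtain - | ⟨x, bs1⟩ := bs
  · simp at hlen
  obtain - | ⟨y, bs2⟩ := bs1
  · simp at hlen
  obtain - | ⟨z, rest⟩ := bs2
  · simp at hlen
  have hrest : rest = [] := by
    simp only [List.length_cons, List.length_nil] at hlen
    exact List.length_eq_zero_iff.mp (by omega)
  subst hrest
  have hx : x ∈ ([{0, 2}, {1, 3}, {4, 5}] : List (Finset (Fin 6))) :=
    h.subset (by simp)
  have hy : y ∈ ([{0, 2}, {1, 3}, {4, 5}] : List (Finset (Fin 6))) :=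
    h.subset (by simp)
  have hz : z ∈ ([{0, 2}, {1, 3}, {4, 5}] : List (Finset (Fin 6))) :=
    h.subset (by simp)
  simp only [List.mem_cons, List.not_mem_nil, or_false] at hx hy hz
  rcases hx with rfl | rfl | rfl <;> rcases hy with rfl | rfl | rfl <;>
    rcases hz with rfl | rfl | rfl <;>
    first
      | exact absurd hnd (by decide)
      | decide
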